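/- Let λ, 𝔢 ∈ ℝ, let I ⊆ ℝ be an interval, and let ℱ, K : I → ℝ be twice differentiable functions satisfying the evolution equations ℱ'' + K'ℱ' = 𝔢² e^{2(ℱ−K)} and K'' + (K')² = 2λ on I. Define C := 3(K')² − 2(ℱ')² + 2𝔢² e^{2(ℱ−K)} − 6λ. Then C satisfies the linear differential equation C' = −2K'C on I; consequently, if C vanishes at some point r₀ ∈ I, then C vanishes identically on I. -/

import Mathlib

/-!
# Propagation of the Hamiltonian constraint for the radial reduced system
  (Subsection 9.3)

The radial ordinary differential equations governing spherically symmetric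
warped-product solutions of the reduced minimal six-dimensional supergravity
system, with transverse metric `𝔥 = e^K(dr² + h_X)`, gerbe flux
`H_b = 𝔢 ν_{h_X}` and Einstein constant `λ` of `(X,h_X)`:

  `ℱ'' + K'ℱ' = 𝔢² e^{2(ℱ-K)}`,   `K'' + (K')² = 2λ`   on the interval `I`.

The Hamiltonian constraint is
  `C := 3(K')² - 2(ℱ')² + 2𝔢² e^{2(ℱ-K)} - 6λ`.

**Statement.**  On `I` the constraint satisfies the linear differential
equation `C' = -2K'C`; consequently, if `C` vanishes at some point `r₀ ∈ I`
then `C` vanishes identically on `I`.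
-/

theorem hamiltonian_constraint_propagation
    (lam ee : ℝ)
    -- the interval I ⊆ ℝ
    (I : Set ℝ) (hI : I.OrdConnected)
    -- twice differentiable functions ℱ, K with derivatives ℱ', ℱ'', K', K''
    (F F' F'' K K' K'' : ℝ → ℝ)
    (hF : ∀ r ∈ I, HasDerivWithinAt F (F' r) I r)
    (hF' : ∀ r ∈ I, HasDerivWithinAt F' (F'' r) I r)
    (hK : ∀ r ∈ I, HasDerivWithinAt K (K' r) I r)
    (hK' : ∀ r ∈ I, HasDerivWithinAt K' (K'' r) I r)
    -- the evolution equations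
    (heq1 : ∀ r ∈ I, F'' r + K' r * F' r = ee ^ 2 * Real.exp (2 * (F r - K r)))
    (heq2 : ∀ r ∈ I, K'' r + (K' r) ^ 2 = 2 * lam)
    -- the Hamiltonian constraint
    (C : ℝ → ℝ)
    (hC : C = fun r => 3 * (K' r) ^ 2 - 2 * (F' r) ^ 2
        + 2 * ee ^ 2 * Real.exp (2 * (F r - K r)) - 6 * lam) :
    -- C satisfies C' = -2K'C on I …
    (∀ r ∈ I, HasDerivWithinAt C (-2 * K' r * C r) I r) ∧
    -- … hence it vanishes identically as soon as it vanishes at one point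
    (∀ r₀ ∈ I, C r₀ = 0 → ∀ r ∈ I, C r = 0) := by
  have hCderiv : ∀ r ∈ I, HasDerivWithinAt C (-2 * K' r * C r) I r := by
    intro r hr
    have hE : HasDerivWithinAt (fun s => Real.exp (2 * (F s - K s)))
        (Real.exp (2 * (F r - K r)) * (2 * (F' r - K' r))) I r :=
      (((hF r hr).sub (hK r hr)).const_mul 2).exp
    have hD : HasDerivWithinAt C
        (3 * (2 * K' r ^ 1 * K'' r) - 2 * (2 * F' r ^ 1 * F'' r)
          + 2 * ee ^ 2 * (Real.exp (2 * (F r - K r)) * (2 * (F' r - K' r)))) I r := by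
      rw [hC]
      exact ((((hK' r hr).pow 2).const_mul 3).sub
        (((hF' r hr).pow 2).const_mul 2)).add (hE.const_mul (2 * ee ^ 2)) |>.sub_const (6 * lam)
    convert hD using 1
    rw [hC]
    have e1 := heq1 r hr
    have e2 := heq2 r hr
    beta_reduce
    linear_combination 4 * F' r * e1 - 6 * K' r * e2
  refine ⟨hCderiv, ?_⟩
  intro r₀ hr₀ h0 r hr
  set G : ℝ → ℝ := fun s => C s * Real.exp (2 * K s) with hG
  have hGderiv : ∀ s ∈ I, HasDerivWithinAt G 0 I s := by
    intro s hs
    have hexp : HasDerivWithinAt (fun t => Real.exp (2 * K t))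
        (Real.exp (2 * K s) * (2 * K' s)) I s := ((hK s hs).const_mul 2).exp
    have this : HasDerivWithinAt (fun t => C t * Real.exp (2 * K t))
        (-2 * K' s * C s * Real.exp (2 * K s) + C s * (Real.exp (2 * K s) * (2 * K' s))) I s :=
      (hCderiv s hs).mul hexp
    convert this using 1
    ring
  have hconv : Convex ℝ I := by
    rw [convex_iff_ordConnected]; exact hI
  have key : ‖G r - G r₀‖ ≤ 0 * ‖r - r₀‖ := by
    refine hconv.norm_image_sub_le_of_norm_hasDerivWithin_le hGderiv ?_ hr₀ hr
    intro x hx; simp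
  have hGeq : G r = G r₀ := by
    have := key
    simp only [zero_mul] at this
    have := norm_le_zero_iff.mp this
    linarith [sub_eq_zero.mp this]
  have hGr₀ : G r₀ = 0 := by simp [hG, h0]
  have : C r * Real.exp (2 * K r) = 0 := by rw [← hGr₀]; exact hGeq
  exact (mul_eq_zero.mp this).resolve_right (Real.exp_ne_zero _)
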